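/- In the setting of the forward-chaining chain S = W_0 ⊊ W_1 ⊊ ⋯ ⊊ W_t ⊇ S' associated with a round-minimal L-optimal CNF Φ for price_L(S,S'), with B_i a smallest member of 𝓑 contained in W_i for i = 0,…,t−1 and B_t := S', we have B_i ⊄ W_{i−1} (i.e., B_i is not a subset of W_{i−1}) for every i = 1,…,t. -/
import Mathlib


open Finset

variable {V : Type*} [Fintype V] [DecidableEq V]

/-- A pure Horn CNF is a finite set of clauses `(B, v)`: body `B`, head `v`,
with `B` nonempty and `v ∉ B`. -/
def PureHorn (Φ : Finset (Finset V × V)) : Prop :=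
  ∀ c ∈ Φ, c.1.Nonempty ∧ c.2 ∉ c.1

/-- A set `W` is closed under the clauses of `Φ`. -/
def HornClosed (Φ : Finset (Finset V × V)) (W : Set V) : Prop :=
  ∀ c ∈ Φ, ↑c.1 ⊆ W → c.2 ∈ W

/-- Forward-chaining closure `F_Φ(Z)`: the smallest set containing `Z`
that is closed under the clauses of `Φ`. -/
def hornClosure (Φ : Finset (Finset V × V)) (Z : Set V) : Set V :=
  ⋂₀ {W : Set V | Z ⊆ W ∧ HornClosed Φ W}

/-- `Ψ_𝓑 = ⋀_{B ∈ 𝓑} B → (V \ B)`. -/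
def keyCNF (𝓑 : Finset (Finset V)) : Finset (Finset V × V) :=
  𝓑.biUnion fun B => (Finset.univ \ B).image fun v => (B, v)

/-- `Φ` represents the key Horn function `h_𝓑`, i.e. `Φ` is a pure Horn CNF
equivalent to `Ψ_𝓑`. -/
def Represents (𝓑 : Finset (Finset V)) (Φ : Finset (Finset V × V)) : Prop :=
  PureHorn Φ ∧ ∀ Z : Finset V, hornClosure Φ ↑Z = hornClosure (keyCNF 𝓑) ↑Z

/-- (B) number of (distinct) bodies. -/
def sizeB (Φ : Finset (Finset V × V)) : ℕ := (Φ.image Prod.fst).card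
/-- (BA) body area `Σ_i |B_i|` over the distinct bodies. -/
def sizeBA (Φ : Finset (Finset V × V)) : ℕ := ∑ B ∈ Φ.image Prod.fst, B.card
/-- (C) number of clauses `Σ_i |H_i|`. -/
def sizeC (Φ : Finset (Finset V × V)) : ℕ := Φ.card
/-- (TA) total area `Σ_i (|B_i| + |H_i|)`. -/
def sizeTA (Φ : Finset (Finset V × V)) : ℕ := sizeBA Φ + sizeC Φ
/-- (BC) bodies plus clauses `Σ_i (|H_i| + 1)`. -/
def sizeBC (Φ : Finset (Finset V × V)) : ℕ := sizeB Φ + sizeC Φ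
/-- (L) number of literals `Σ_i (|B_i| + 1)·|H_i|`. -/
def sizeL (Φ : Finset (Finset V × V)) : ℕ := ∑ c ∈ Φ, (c.1.card + 1)

/-- `μ` is one of the six size measures. -/
def IsMeasure (μ : Finset (Finset V × V) → ℕ) : Prop :=
  μ = sizeB ∨ μ = sizeBA ∨ μ = sizeTA ∨ μ = sizeC ∨ μ = sizeBC ∨ μ = sizeL

/-- `OPT_μ(𝓑)`: minimum `μ`-size of a CNF representing `h_𝓑`. -/
noncomputable def OPT (μ : Finset (Finset V × V) → ℕ) (𝓑 : Finset (Finset V)) : ℕ :=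
  sInf {s : ℕ | ∃ Φ : Finset (Finset V × V), Represents 𝓑 Φ ∧ μ Φ = s}

/-- `price_μ(S,T)`: minimum `μ`-size of a pure Horn CNF with bodies in `𝓑`
whose forward chaining from `S` reaches all of `T`. -/
noncomputable def price (μ : Finset (Finset V × V) → ℕ) (𝓑 : Finset (Finset V))
    (S T : Finset V) : ℕ :=
  sInf {s : ℕ | ∃ Φ : Finset (Finset V × V),
    PureHorn Φ ∧ (∀ c ∈ Φ, c.1 ∈ 𝓑) ∧ ↑T ⊆ hornClosure Φ ↑S ∧ μ Φ = s}

/-- One round of forward chaining. -/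
def fcStep (Φ : Finset (Finset V × V)) (W : Finset V) : Finset V :=
  W ∪ (Φ.filter fun c => c.1 ⊆ W).image Prod.snd

/-- The forward-chaining chain `W_0 = S`, `W_{i+1} = fcStep Φ W_i`. -/
def fcChain (Φ : Finset (Finset V × V)) (S : Finset V) : ℕ → Finset V
  | 0 => S
  | i + 1 => fcStep Φ (fcChain Φ S i)

/-- The CNF `⋀_{i=0}^{t-1} Bs i → (Bs (i+1) \ (S ∪ ⋃_{j=1}^{i} Bs j))`. -/
def chainCNF (S : Finset V) (Bs : ℕ → Finset V) (t : ℕ) :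
    Finset (Finset V × V) :=
  (Finset.range t).biUnion fun i =>
    (Bs (i + 1) \ (S ∪ (Finset.Icc 1 i).biUnion Bs)).image fun v => (Bs i, v)

section AuxLemmas

variable {V : Type*} [Fintype V] [DecidableEq V]

lemma mem_fcStep {Φ : Finset (Finset V × V)} {W : Finset V} {v : V} :
    v ∈ fcStep Φ W ↔ v ∈ W ∨ ∃ c ∈ Φ, c.1 ⊆ W ∧ c.2 = v := by
  simp only [fcStep, Finset.mem_union, Finset.mem_image, Finset.mem_filter]
  constructor
  · rintro (h | ⟨c, ⟨hc, hcs⟩, rfl⟩)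
    · exact Or.inl h
    · exact Or.inr ⟨c, hc, hcs, rfl⟩
  · rintro (h | ⟨c, hc, hcs, rfl⟩)
    · exact Or.inl h
    · exact Or.inr ⟨c, ⟨hc, hcs⟩, rfl⟩

lemma fcChain_mono_succ (Φ : Finset (Finset V × V)) (S : Finset V) (j : ℕ) :
    fcChain Φ S j ⊆ fcChain Φ S (j + 1) := Finset.subset_union_left

lemma fcChain_mono (Φ : Finset (Finset V × V)) (S : Finset V) {j k : ℕ} (h : j ≤ k) :
    fcChain Φ S j ⊆ fcChain Φ S k := by
  induction k with
  | zero => simp [Nat.le_zero.mp h]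
  | succ k ih =>
    rcases Nat.lt_or_ge j (k + 1) with h' | h'
    · exact (ih (Nat.lt_succ_iff.mp h')).trans (fcChain_mono_succ _ _ _)
    · have : j = k + 1 := le_antisymm h h'
      simp [this]

lemma fcChain_subset_closed (Φ : Finset (Finset V × V)) (S : Finset V)
    (W : Set V) (hS : ↑S ⊆ W) (hW : HornClosed Φ W) :
    ∀ j, ↑(fcChain Φ S j) ⊆ W := by
  intro j
  induction j with
  | zero => exact hS
  | succ j ih =>
    intro v hv
    rcases mem_fcStep.mp hv with h | ⟨c, hc, hcs, rfl⟩
    · exact ih h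
    · exact hW c hc fun x hx => ih (hcs hx)

lemma subset_hornClosure (Φ : Finset (Finset V × V)) (Z : Set V) :
    Z ⊆ hornClosure Φ Z := fun v hv W hW => hW.1 hv

lemma hornClosure_closed (Φ : Finset (Finset V × V)) (Z : Set V) :
    HornClosed Φ (hornClosure Φ Z) := by
  intro c hc hsub W hW
  exact hW.2 c hc fun x hx => hsub hx W hW

lemma hornClosure_subset {Φ : Finset (Finset V × V)} {Z W : Set V}
    (hZ : Z ⊆ W) (hW : HornClosed Φ W) : hornClosure Φ Z ⊆ W :=
  Set.sInter_subset_of_mem ⟨hZ, hW⟩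

lemma fcChain_subset_hornClosure (Φ : Finset (Finset V × V)) (S : Finset V) (j : ℕ) :
    ↑(fcChain Φ S j) ⊆ hornClosure Φ ↑S :=
  fcChain_subset_closed Φ S _ (subset_hornClosure Φ ↑S) (hornClosure_closed Φ ↑S) j

lemma sum_image_le_nat {α β : Type*} [DecidableEq α] [DecidableEq β]
    (s : Finset α) (f : α → β) (g : β → ℕ) :
    ∑ b ∈ s.image f, g b ≤ ∑ a ∈ s, g (f a) := by
  induction s using Finset.induction_on with
  | empty => simp
  | @insert a s ha ih =>
    rw [Finset.image_insert, Finset.sum_insert ha]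
    by_cases h : f a ∈ s.image f
    · rw [Finset.insert_eq_self.mpr h]
      exact ih.trans (Nat.le_add_left _ _)
    · rw [Finset.sum_insert h]
      exact Nat.add_le_add_left ih _

end AuxLemmas

/-- Proposition 1: in the forward-chaining chain of a round-minimal L-optimal
CNF `Φ` for `price_L(S,S')`, with `B_i` a smallest body inside `W_i` and
`B_t := S'`, we have `B_i ⊄ W_{i-1}` for `i = 1,…,t`. -/
theorem stmt10 {V : Type*} [Fintype V] [DecidableEq V]
    (𝓑 : Finset (Finset V))
    (hne : ∀ B ∈ 𝓑, B.Nonempty) (hproper : ∀ B ∈ 𝓑, B ≠ Finset.univ)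
    (hsperner : ∀ B ∈ 𝓑, ∀ B' ∈ 𝓑, B ⊆ B' → B = B')
    (hcover : ∀ v : V, ∃ B ∈ 𝓑, v ∈ B)
    (hinter : ∀ v : V, ∃ B ∈ 𝓑, v ∉ B)
    (S S' : Finset V) (hS : ∃ B ∈ 𝓑, B ⊆ S)
    (Φ : Finset (Finset V × V)) (t : ℕ)
    (hPH : PureHorn Φ) (hbodies : ∀ c ∈ Φ, c.1 ∈ 𝓑)
    (hSreach : ↑S' ⊆ hornClosure Φ ↑S)
    (hopt : sizeL Φ = price sizeL 𝓑 S S')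
    (hstab : fcChain Φ S t = fcChain Φ S (t + 1))
    (htleast : ∀ j < t, fcChain Φ S j ≠ fcChain Φ S (j + 1))
    (hround : ∀ (Φ' : Finset (Finset V × V)) (t' : ℕ), PureHorn Φ' →
      (∀ c ∈ Φ', c.1 ∈ 𝓑) → ↑S' ⊆ hornClosure Φ' ↑S →
      sizeL Φ' = price sizeL 𝓑 S S' →
      fcChain Φ' S t' = fcChain Φ' S (t' + 1) → t ≤ t')
    (Bseq : ℕ → Finset V)
    (hBseq : ∀ i < t, Bseq i ∈ 𝓑 ∧ Bseq i ⊆ fcChain Φ S i ∧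
      ∀ B' ∈ 𝓑, B' ⊆ fcChain Φ S i → (Bseq i).card ≤ B'.card)
    (hBt : Bseq t = S')
    : ∀ i : ℕ, 1 ≤ i → i ≤ t → ¬ Bseq i ⊆ fcChain Φ S (i - 1) := by
  intro i hi1 hit hsub
  obtain ⟨k, rfl⟩ : ∃ k, i = k + 1 := ⟨i - 1, by omega⟩
  simp only [Nat.add_sub_cancel] at hsub
  -- basic facts about the chain of Φ
  have hWt_closed : HornClosed Φ ↑(fcChain Φ S t) := by
    intro c hc hcs
    have hsub' : c.1 ⊆ fcChain Φ S t := by exact_mod_cast hcs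
    have hmem : c.2 ∈ fcStep Φ (fcChain Φ S t) :=
      mem_fcStep.mpr (Or.inr ⟨c, hc, hsub', rfl⟩)
    have : c.2 ∈ fcChain Φ S (t + 1) := hmem
    rw [← hstab] at this
    exact_mod_cast this
  have hS0 : (↑S : Set V) ⊆ ↑(fcChain Φ S t) := by
    exact_mod_cast Finset.coe_subset.mpr (fcChain_mono Φ S (Nat.zero_le t))
  have hS'Wt : S' ⊆ fcChain Φ S t := by
    intro v hv
    have hv' : v ∈ hornClosure Φ ↑S := hSreach (by exact_mod_cast hv)
    exact_mod_cast hornClosure_subset hS0 hWt_closed hv'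
  rcases eq_or_lt_of_le hit with heq | hlt
  · -- case i = t : dropping last-round clauses contradicts L-optimality
    subst heq
    have hS'k : S' ⊆ fcChain Φ S k := hBt ▸ hsub
    set Φ' := Φ.filter (fun c => c.2 ∈ fcChain Φ S k) with hΦ'
    have hchain : ∀ j, j ≤ k → ↑(fcChain Φ S j) ⊆ hornClosure Φ' ↑S := by
      intro j
      induction j with
      | zero => exact fun _ => subset_hornClosure Φ' ↑S
      | succ j ih =>
        intro hj v hv
        rcases mem_fcStep.mp hv with h | ⟨c, hc, hcs, rfl⟩
        · exact ih (by omega) h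
        · have hvk : c.2 ∈ fcChain Φ S k := fcChain_mono Φ S hj hv
          have hc' : c ∈ Φ' := Finset.mem_filter.mpr ⟨hc, hvk⟩
          exact hornClosure_closed Φ' ↑S c hc' (fun x hx => ih (by omega) (hcs hx))
    have hne' : fcChain Φ S k ≠ fcChain Φ S (k + 1) := htleast k (by omega)
    obtain ⟨v, hvk1, hvk⟩ : ∃ v ∈ fcChain Φ S (k + 1), v ∉ fcChain Φ S k := by
      by_contra hcon
      push_neg at hcon
      exact hne' (Finset.Subset.antisymm (fcChain_mono_succ Φ S k) hcon)
    obtain ⟨c, hc, hcs, rfl⟩ : ∃ c ∈ Φ, c.1 ⊆ fcChain Φ S k ∧ c.2 = v := by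
      rcases mem_fcStep.mp hvk1 with h | h
      · exact absurd h hvk
      · exact h
    have hcnot : c ∉ Φ' := by
      intro hmem
      exact hvk (Finset.mem_filter.mp hmem).2
    have hlt' : sizeL Φ' < sizeL Φ := by
      unfold sizeL
      exact Finset.sum_lt_sum_of_subset (Finset.filter_subset _ _) hc hcnot
        (Nat.succ_pos _) (fun j _ _ => Nat.zero_le _)
    have hPH' : PureHorn Φ' := fun c hc => hPH c (Finset.filter_subset _ _ hc)
    have hbodies' : ∀ c ∈ Φ', c.1 ∈ 𝓑 := fun c hc => hbodies c (Finset.filter_subset _ _ hc)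
    have hreach' : ↑S' ⊆ hornClosure Φ' ↑S := by
      intro v hv
      have hv' : v ∈ S' := by exact_mod_cast hv
      exact hchain k le_rfl (by exact_mod_cast hS'k hv')
    have hprice : price sizeL 𝓑 S S' ≤ sizeL Φ' :=
      Nat.sInf_le ⟨Φ', hPH', hbodies', hreach', rfl⟩
    omega
  · -- case i < t : merging rounds i and i+1 contradicts round-minimality
    obtain ⟨hB𝓑, hBW, hBmin⟩ := hBseq (k + 1) hlt
    classical
    set f : Finset V × V → Finset V × V := fun c =>
      if c.1 ⊆ fcChain Φ S (k + 1) ∧ ¬ c.1 ⊆ fcChain Φ S k ∧ c.2 ∉ fcChain Φ S k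
      then (Bseq (k + 1), c.2) else c with hf
    set Φ' := Φ.image f with hΦ'
    have hfpos : ∀ c : Finset V × V,
        (c.1 ⊆ fcChain Φ S (k + 1) ∧ ¬ c.1 ⊆ fcChain Φ S k ∧ c.2 ∉ fcChain Φ S k) →
        f c = (Bseq (k + 1), c.2) := by
      intro c h
      simp only [hf]
      exact if_pos h
    have hfneg : ∀ c : Finset V × V,
        ¬ (c.1 ⊆ fcChain Φ S (k + 1) ∧ ¬ c.1 ⊆ fcChain Φ S k ∧ c.2 ∉ fcChain Φ S k) →
        f c = c := by
      intro c h
      simp only [hf]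
      exact if_neg h
    have hPH' : PureHorn Φ' := by
      intro c' hc'
      obtain ⟨c, hc, rfl⟩ := Finset.mem_image.mp hc'
      by_cases h : c.1 ⊆ fcChain Φ S (k + 1) ∧ ¬ c.1 ⊆ fcChain Φ S k ∧ c.2 ∉ fcChain Φ S k
      · rw [hfpos c h]
        exact ⟨hne _ hB𝓑, fun hmem => h.2.2 (hsub hmem)⟩
      · rw [hfneg c h]
        exact hPH c hc
    have hbodies' : ∀ c' ∈ Φ', c'.1 ∈ 𝓑 := by
      intro c' hc'
      obtain ⟨c, hc, rfl⟩ := Finset.mem_image.mp hc'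
      by_cases h : c.1 ⊆ fcChain Φ S (k + 1) ∧ ¬ c.1 ⊆ fcChain Φ S k ∧ c.2 ∉ fcChain Φ S k
      · rw [hfpos c h]; exact hB𝓑
      · rw [hfneg c h]; exact hbodies c hc
    -- claim A : the chain of Φ' dominates the chain of Φ
    have hA : ∀ j, fcChain Φ S j ⊆ fcChain Φ' S j := by
      intro j
      induction j with
      | zero => exact Finset.Subset.refl S
      | succ j ih =>
        intro v hv
        rcases mem_fcStep.mp hv with h | ⟨c, hc, hcs, rfl⟩
        · exact fcChain_mono_succ Φ' S j (ih h)
        · by_cases h : c.1 ⊆ fcChain Φ S (k + 1) ∧ ¬ c.1 ⊆ fcChain Φ S k ∧ c.2 ∉ fcChain Φ S k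
          · have hkj : k ≤ j := by
              by_contra hj
              push_neg at hj
              exact h.2.1 (hcs.trans (fcChain_mono Φ S (by omega)))
            have hBsub : Bseq (k + 1) ⊆ fcChain Φ' S j :=
              (hsub.trans (fcChain_mono Φ S hkj)).trans ih
            have hmem : (Bseq (k + 1), c.2) ∈ Φ' :=
              Finset.mem_image.mpr ⟨c, hc, hfpos c h⟩
            exact mem_fcStep.mpr (Or.inr ⟨_, hmem, hBsub, rfl⟩)
          · have hmem : c ∈ Φ' := Finset.mem_image.mpr ⟨c, hc, hfneg c h⟩
            exact mem_fcStep.mpr (Or.inr ⟨c, hmem, fun x hx => ih (hcs hx), rfl⟩)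
    -- claim C : for j ≥ k+1, the chain of Φ' is one round ahead
    have hC : ∀ j, k + 1 ≤ j → fcChain Φ S (j + 1) ⊆ fcChain Φ' S j := by
      intro j
      induction j with
      | zero => omega
      | succ j ih =>
        intro hj
        rcases Nat.lt_or_ge (k + 1) (j + 1) with hj' | hj'
        · -- inductive step, k + 1 ≤ j
          have ihj := ih (by omega)
          intro v hv
          rcases mem_fcStep.mp hv with h | ⟨c, hc, hcs, rfl⟩
          · exact fcChain_mono_succ Φ' S j (ihj h)
          · by_cases h : c.1 ⊆ fcChain Φ S (k + 1) ∧ ¬ c.1 ⊆ fcChain Φ S k ∧ c.2 ∉ fcChain Φ S k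
            · have hBsub : Bseq (k + 1) ⊆ fcChain Φ' S j :=
                (hsub.trans ((fcChain_mono Φ S (by omega)).trans ihj))
              have hmem : (Bseq (k + 1), c.2) ∈ Φ' :=
                Finset.mem_image.mpr ⟨c, hc, hfpos c h⟩
              exact mem_fcStep.mpr (Or.inr ⟨_, hmem, hBsub, rfl⟩)
            · have hmem : c ∈ Φ' := Finset.mem_image.mpr ⟨c, hc, hfneg c h⟩
              exact mem_fcStep.mpr (Or.inr ⟨c, hmem, hcs.trans ihj, rfl⟩)
        · -- base case j = k
          have hjk : j = k := by omega
          subst hjk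
          intro v hv
          by_cases hvk : v ∈ fcChain Φ S (j + 1)
          · exact hA (j + 1) hvk
          · rcases mem_fcStep.mp hv with h | ⟨c, hc, hcs, rfl⟩
            · exact absurd h hvk
            · have hnotk : c.2 ∉ fcChain Φ S j := fun h' => hvk (fcChain_mono_succ Φ S j h')
              have hc1 : ¬ c.1 ⊆ fcChain Φ S j := by
                intro hcs'
                exact hvk (mem_fcStep.mpr (Or.inr ⟨c, hc, hcs', rfl⟩))
              have h : c.1 ⊆ fcChain Φ S (j + 1) ∧ ¬ c.1 ⊆ fcChain Φ S j ∧
                  c.2 ∉ fcChain Φ S j := ⟨hcs, hc1, hnotk⟩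
              have hmem : (Bseq (j + 1), c.2) ∈ Φ' :=
                Finset.mem_image.mpr ⟨c, hc, hfpos c h⟩
              have hBsub : Bseq (j + 1) ⊆ fcChain Φ' S j := hsub.trans (hA j)
              exact mem_fcStep.mpr (Or.inr ⟨_, hmem, hBsub, rfl⟩)
    -- the chain of Φ' stays inside fcChain Φ S t
    have hWtclosed' : HornClosed Φ' ↑(fcChain Φ S t) := by
      intro c' hc' hcs'
      obtain ⟨c, hc, rfl⟩ := Finset.mem_image.mp hc'
      by_cases h : c.1 ⊆ fcChain Φ S (k + 1) ∧ ¬ c.1 ⊆ fcChain Φ S k ∧ c.2 ∉ fcChain Φ S k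
      · rw [hfpos c h]
        have : c.1 ⊆ fcChain Φ S t := h.1.trans (fcChain_mono Φ S (by omega))
        exact hWt_closed c hc (by exact_mod_cast this)
      · rw [hfneg c h] at hcs' ⊢
        exact hWt_closed c hc hcs'
    have hup : ∀ j, fcChain Φ' S j ⊆ fcChain Φ S t := by
      intro j
      have := fcChain_subset_closed Φ' S ↑(fcChain Φ S t) hS0 hWtclosed' j
      exact_mod_cast this
    obtain ⟨m, rfl⟩ : ∃ m, t = m + 1 := ⟨t - 1, by omega⟩
    have hm : k + 1 ≤ m := by omega
    have hstab' : fcChain Φ' S m = fcChain Φ' S (m + 1) :=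
      Finset.Subset.antisymm (fcChain_mono_succ Φ' S m) ((hup (m + 1)).trans (hC m hm))
    have hreach' : ↑S' ⊆ hornClosure Φ' ↑S := by
      intro v hv
      have hv' : v ∈ S' := by exact_mod_cast hv
      exact fcChain_subset_hornClosure Φ' S (m + 1)
        (by exact_mod_cast hA (m + 1) (hS'Wt hv'))
    have hle : sizeL Φ' ≤ sizeL Φ := by
      unfold sizeL
      calc ∑ c ∈ Φ.image f, (c.1.card + 1)
          ≤ ∑ c ∈ Φ, ((f c).1.card + 1) := sum_image_le_nat Φ f (fun c => c.1.card + 1)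
        _ ≤ ∑ c ∈ Φ, (c.1.card + 1) := by
            apply Finset.sum_le_sum
            intro c hc
            by_cases h : c.1 ⊆ fcChain Φ S (k + 1) ∧ ¬ c.1 ⊆ fcChain Φ S k ∧
                c.2 ∉ fcChain Φ S k
            · rw [hfpos c h]
              exact Nat.add_le_add_right (hBmin c.1 (hbodies c hc) h.1) 1
            · rw [hfneg c h]
    have hprice : price sizeL 𝓑 S S' ≤ sizeL Φ' :=
      Nat.sInf_le ⟨Φ', hPH', hbodies', hreach', rfl⟩
    have hopt' : sizeL Φ' = price sizeL 𝓑 S S' := le_antisymm (hopt ▸ hle) hprice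
    have := hround Φ' m hPH' hbodies' hreach' hopt' hstab'
    omega
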